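/- Fix an even m ≥ 2 and let G = ℤ_m^n with degree d = n if m = 2 and d = 2n if m > 2. There is a constant c > 0 (depending only on m) such that for all n and all g ∈ ℕ there exists a family 𝒱 = 𝒱(g) of subsets of V(G) with |𝒱| ≤ 2^{c·(g·(log d)/d + d)} such that for every G²-connected set X ⊆ V(G) with |N(X)| = g, the family 𝒱 contains a set which covers X. -/

import Mathlib

open Finset Classical

noncomputable section

/-- The discrete torus `ℤ_m^n`: vertex set `{0,…,m-1}^n`, with `x ~ y` iff they differ by
`±1 (mod m)` in exactly one coordinate. -/
def torus (m n : ℕ) : SimpleGraph (Fin n → ZMod m) :=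
  SimpleGraph.fromRel (fun x y => ∃ i, x i = y i + 1 ∧ ∀ j, j ≠ i → x j = y j)

/-- The neighbourhood `N(X)` of a set of vertices: all vertices with a neighbour in `X`. -/
def nbhd {V : Type*} [Fintype V] (G : SimpleGraph V) (X : Finset V) : Finset V :=
  univ.filter fun v => ∃ x ∈ X, G.Adj x v

/-- The square `G²` of a graph: vertices at distance `1` or `2` are adjacent. -/
def graphSquare {V : Type*} (G : SimpleGraph V) : SimpleGraph V :=
  SimpleGraph.fromRel fun u v => G.Adj u v ∨ ∃ w, G.Adj u w ∧ G.Adj w v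

/-- `X` is `G²`-connected: the subgraph of `G²` induced on `X` is connected. -/
def GsqConnected {V : Type*} (G : SimpleGraph V) (X : Finset V) : Prop :=
  ((graphSquare G).induce (X : Set V)).Connected

/-- The degree `d` of the torus `ℤ_m^n`. -/
def degT (m n : ℕ) : ℕ := if m = 2 then n else 2 * n

/-- `Y` covers `X`: every vertex of `X` has a neighbour in `Y` and every vertex of `Y`
has a neighbour in `X`. -/
def Covers {V : Type*} (G : SimpleGraph V) (Y X : Finset V) : Prop :=
  (∀ x ∈ X, ∃ y ∈ Y, G.Adj x y) ∧ ∀ y ∈ Y, ∃ x ∈ X, G.Adj y x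

section CoverWalk

universe u

lemma covering_walk_aux : ∀ (N : ℕ) (V : Type u) [Fintype V] [DecidableEq V]
    (G : SimpleGraph V) (hconn : G.Connected) (v₀ : V), Fintype.card V = N →
    ∃ p : G.Walk v₀ v₀, p.length ≤ 2 * (N - 1) ∧ ∀ v : V, v ∈ p.support := by
  intro N
  induction N using Nat.strong_induction_on with
  | _ N IH =>
    intro V _ _ G hconn v₀ hcard
    obtain ⟨u, -, hu⟩ := Finset.exists_max_image Finset.univ (G.dist v₀) ⟨v₀, Finset.mem_univ _⟩
    by_cases huv : u = v₀
    · have hall : ∀ v : V, v = v₀ := by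
        intro v
        have h1 : G.dist v₀ v = 0 := by
          have h := hu v (Finset.mem_univ v)
          rw [huv, SimpleGraph.dist_self, Nat.le_zero] at h
          exact h
        exact (hconn.dist_eq_zero_iff.1 h1).symm
      exact ⟨SimpleGraph.Walk.nil, by simp, fun v => by rw [hall v]; simp⟩
    · have hN2 : 2 ≤ N := by
        rw [← hcard]
        exact Fintype.one_lt_card_iff_nontrivial.2 ⟨u, v₀, huv⟩
      have hv₀u : v₀ ≠ u := fun h => huv h.symm
      -- geodesics to v₀ avoid u
      have keyreach : ∀ a : V, a ≠ u → ∃ q : G.Walk a v₀, u ∉ q.support := by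
        intro a ha
        obtain ⟨q, hq⟩ := (hconn a v₀).exists_walk_length_eq_dist
        refine ⟨q, fun hmem => ?_⟩
        have h1 : G.dist a u ≤ (q.takeUntil u hmem).length := SimpleGraph.dist_le _
        have h2 : G.dist u v₀ ≤ (q.dropUntil u hmem).length := SimpleGraph.dist_le _
        have h3 : (q.takeUntil u hmem).length + (q.dropUntil u hmem).length = q.length := by
          rw [← SimpleGraph.Walk.length_append, SimpleGraph.Walk.take_spec]
        have h4 : 0 < G.dist a u := hconn.pos_dist_of_ne ha
        have h5 := hu a (Finset.mem_univ a)
        have h6 : G.dist u v₀ = G.dist v₀ u := SimpleGraph.dist_comm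
        have h7 : G.dist a v₀ = G.dist v₀ a := SimpleGraph.dist_comm
        omega
      set s : Set V := {v | v ≠ u} with hs
      have toInd : ∀ (a b : V) (q : G.Walk a b), u ∉ q.support → ∀ (ha : a ∈ s) (hb : b ∈ s),
          (G.induce s).Reachable ⟨a, ha⟩ ⟨b, hb⟩ := by
        intro a b q
        induction q with
        | nil => intro _ ha hb; exact SimpleGraph.Reachable.refl _
        | @cons a c b h q ih =>
          intro hsupp ha hb
          have hcs : c ∈ s := by
            simp only [hs, Set.mem_setOf_eq]
            intro hcu
            exact hsupp (by rw [SimpleGraph.Walk.support_cons]; right; rw [← hcu]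
                            exact q.start_mem_support)
          have hsupp' : u ∉ q.support := fun hh => hsupp (by rw [SimpleGraph.Walk.support_cons]; right; exact hh)
          have hadj : (G.induce s).Adj ⟨a, ha⟩ ⟨c, hcs⟩ := h
          exact hadj.reachable.trans (ih hsupp' hcs hb)
      have hv₀s : v₀ ∈ s := hv₀u
      haveI : Nonempty s := ⟨⟨v₀, hv₀s⟩⟩
      have hG'conn : (G.induce s).Connected := by
        apply SimpleGraph.Connected.mk
        intro a b
        obtain ⟨qa, hqa⟩ := keyreach a.1 a.2
        obtain ⟨qb, hqb⟩ := keyreach b.1 b.2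
        have ra := toInd a.1 v₀ qa hqa a.2 hv₀s
        have rb := toInd b.1 v₀ qb hqb b.2 hv₀s
        simpa using ra.trans rb.symm
      have hcard' : Fintype.card s = N - 1 := by
        have : Fintype.card s = Fintype.card V - Fintype.card {v : V // v = u} := by
          exact Fintype.card_subtype_compl _
        rw [this, hcard, Fintype.card_subtype_eq]
      obtain ⟨p', hp'len, hp'cov⟩ := IH (N - 1) (by omega) s (G.induce s) hG'conn ⟨v₀, hv₀s⟩ hcard'
      let F : G.induce s →g G := ⟨Subtype.val, fun h => h⟩
      let q : G.Walk v₀ v₀ := p'.map F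
      have hqlen : q.length = p'.length := SimpleGraph.Walk.length_map _ _
      have hqcov : ∀ v : V, v ≠ u → v ∈ q.support := by
        intro v hv
        have : (⟨v, hv⟩ : s) ∈ p'.support := hp'cov _
        have : v ∈ p'.support.map F := List.mem_map.2 ⟨⟨v, hv⟩, this, rfl⟩
        rwa [← SimpleGraph.Walk.support_map] at this
      -- neighbor z of u
      obtain ⟨w, hw⟩ := (hconn u v₀).exists_walk_length_eq_dist
      have hwpos : 0 < w.length := by
        rw [hw]; exact hconn.pos_dist_of_ne huv
      obtain ⟨z, hadj, hz⟩ : ∃ z : V, G.Adj u z ∧ z ≠ u := by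
        cases w with
        | nil => simp at hwpos
        | cons h w' => exact ⟨_, h, h.ne'⟩
      have hzq : z ∈ q.support := hqcov z hz
      refine ⟨(q.takeUntil z hzq).append ((SimpleGraph.Walk.cons hadj.symm
        (SimpleGraph.Walk.cons hadj SimpleGraph.Walk.nil)).append (q.dropUntil z hzq)), ?_, ?_⟩
      · have h3 : (q.takeUntil z hzq).length + (q.dropUntil z hzq).length = q.length := by
          rw [← SimpleGraph.Walk.length_append, SimpleGraph.Walk.take_spec]
        simp only [SimpleGraph.Walk.length_append, SimpleGraph.Walk.length_cons,
          SimpleGraph.Walk.length_nil]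
        omega
      · intro v
        rw [SimpleGraph.Walk.mem_support_append_iff, SimpleGraph.Walk.mem_support_append_iff]
        by_cases hvu : v = u
        · subst hvu; right; left; simp
        · have : v ∈ q.support := hqcov v hvu
          rw [← SimpleGraph.Walk.take_spec q hzq, SimpleGraph.Walk.mem_support_append_iff] at this
          tauto

end CoverWalk

section Abstract
variable {V : Type} [Fintype V] [DecidableEq V] {G : SimpleGraph V}

/-- `near G k u v`: there is a walk of length at most `k` from `u` to `v`. -/
def near (G : SimpleGraph V) (k : ℕ) (u v : V) : Prop := ∃ p : G.Walk u v, p.length ≤ k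

lemma near_refl (k : ℕ) (u : V) : near G k u u := ⟨SimpleGraph.Walk.nil, by simp⟩

lemma near_symm {k : ℕ} {u v : V} (h : near G k u v) : near G k v u := by
  obtain ⟨p, hp⟩ := h
  exact ⟨p.reverse, by simpa using hp⟩

lemma near_trans {k l : ℕ} {u v w : V} (h : near G k u v) (h' : near G l v w) :
    near G (k + l) u w := by
  obtain ⟨p, hp⟩ := h; obtain ⟨q, hq⟩ := h'
  exact ⟨p.append q, by rw [SimpleGraph.Walk.length_append]; omega⟩

lemma near_mono {k l : ℕ} {u v : V} (hkl : k ≤ l) (h : near G k u v) : near G l u v := by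
  obtain ⟨p, hp⟩ := h; exact ⟨p, le_trans hp hkl⟩

lemma sq_near {u v : V} (h : (graphSquare G).Adj u v) : near G 2 u v := by
  rw [graphSquare, SimpleGraph.fromRel_adj] at h
  obtain ⟨-, h | h⟩ := h
  · obtain h | ⟨w, h1, h2⟩ := h
    · exact ⟨SimpleGraph.Walk.cons h SimpleGraph.Walk.nil, by simp⟩
    · exact ⟨SimpleGraph.Walk.cons h1 (SimpleGraph.Walk.cons h2 SimpleGraph.Walk.nil), by simp⟩
  · obtain h | ⟨w, h1, h2⟩ := h
    · exact near_symm ⟨SimpleGraph.Walk.cons h SimpleGraph.Walk.nil, by simp⟩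
    · exact near_symm ⟨SimpleGraph.Walk.cons h1 (SimpleGraph.Walk.cons h2 SimpleGraph.Walk.nil),
        by simp⟩

lemma near2_cases {u v : V} (h : near G 2 u v) :
    u = v ∨ G.Adj u v ∨ ∃ z, G.Adj u z ∧ G.Adj z v := by
  obtain ⟨p, hp⟩ := h
  cases p with
  | nil => left; rfl
  | @cons _ c _ h' p' =>
    cases p' with
    | nil => right; left; exact h'
    | cons h'' p''' =>
      cases p''' with
      | nil => right; right; exact ⟨c, h', h''⟩
      | cons h4 p4 =>
        exfalso
        simp only [SimpleGraph.Walk.length_cons] at hp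
        omega

/-- A maximal `2`-separated subset of `X`. -/
lemma exists_code (G : SimpleGraph V) (X : Finset V) :
    ∃ W : Finset V, W ⊆ X ∧ (∀ u ∈ W, ∀ v ∈ W, u ≠ v → ¬ near G 2 u v) ∧
      (∀ x ∈ X, ∃ w ∈ W, near G 2 x w) := by
  classical
  set S : Finset (Finset V) := X.powerset.filter
    (fun W => ∀ u ∈ W, ∀ v ∈ W, u ≠ v → ¬ near G 2 u v) with hS
  have hmem : ∀ W, W ∈ S ↔ (W ⊆ X ∧ ∀ u ∈ W, ∀ v ∈ W, u ≠ v → ¬ near G 2 u v) := by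
    intro W; simp [hS, Finset.mem_powerset]
  have hne : S.Nonempty := ⟨∅, (hmem ∅).2 ⟨Finset.empty_subset _, by simp⟩⟩
  obtain ⟨W, hWS, hWmax⟩ := Finset.exists_max_image S Finset.card hne
  obtain ⟨hWX, hWsep⟩ := (hmem W).1 hWS
  refine ⟨W, hWX, hWsep, ?_⟩
  intro x hx
  by_contra hno
  push_neg at hno
  have hxW : x ∉ W := fun hxW => hno x hxW (near_refl 2 x)
  have hins : insert x W ∈ S := by
    refine (hmem _).2 ⟨Finset.insert_subset hx hWX, ?_⟩
    intro u hu v hv huv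
    rcases Finset.mem_insert.1 hu with rfl | hu' <;> rcases Finset.mem_insert.1 hv with rfl | hv'
    · exact absurd rfl huv
    · exact hno v hv'
    · exact fun hnear => hno u hu' (near_symm hnear)
    · exact hWsep u hu' v hv' huv
  have := hWmax _ hins
  rw [Finset.card_insert_of_notMem hxW] at this
  omega

lemma code_walk (G : SimpleGraph V) (X W : Finset V) (hconn : GsqConnected G X) (hWX : W ⊆ X)
    (hmax : ∀ x ∈ X, ∃ w ∈ W, near G 2 x w) (hWne : W.Nonempty) :
    ∃ (v₀ : V) (q : G.Walk v₀ v₀), v₀ ∈ W ∧ q.length ≤ 12 * (W.card - 1) ∧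
      ∀ w ∈ W, w ∈ q.support := by
  classical
  set SL : SimpleGraph {x // x ∈ W} :=
    { Adj := fun a b => a ≠ b ∧ near G 6 a.1 b.1
      symm := ⟨fun a b h => ⟨h.1.symm, near_symm h.2⟩⟩
      loopless := ⟨fun a h => h.1 rfl⟩ } with hSL
  have edge_or_eq : ∀ (a b : {x // x ∈ W}), near G 6 a.1 b.1 → SL.Reachable a b := by
    intro a b h
    by_cases hab : a = b
    · subst hab; exact SimpleGraph.Reachable.refl _
    · exact SimpleGraph.Adj.reachable (by exact ⟨hab, h⟩)
  have key : ∀ (x y : ↥(X : Set V)) (p : ((graphSquare G).induce (X : Set V)).Walk x y)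
      (wa wb : {x // x ∈ W}), near G 2 x.1 wa.1 → near G 2 y.1 wb.1 →
      SL.Reachable wa wb := by
    intro x y p
    induction p with
    | nil =>
      intro wa wb ha hb
      exact edge_or_eq wa wb (near_mono (by norm_num) (near_trans (near_symm ha) hb))
    | @cons x c y h p ih =>
      intro wa wb ha hb
      have hcX : c.1 ∈ X := by exact_mod_cast c.2
      obtain ⟨w', hw'W, hw'⟩ := hmax c.1 hcX
      have hsq : (graphSquare G).Adj x.1 c.1 := h
      have h6 : near G 6 wa.1 w' := near_mono (by norm_num)
        (near_trans (near_trans (near_symm ha) (sq_near hsq)) hw')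
      exact (edge_or_eq wa ⟨w', hw'W⟩ h6).trans (ih ⟨w', hw'W⟩ wb hw' hb)
  obtain ⟨v₀, hv₀⟩ := hWne
  haveI : Nonempty {x // x ∈ W} := ⟨⟨v₀, hv₀⟩⟩
  have SLconn : SL.Connected := by
    apply SimpleGraph.Connected.mk
    intro a b
    have haX : a.1 ∈ (X : Set V) := by exact_mod_cast hWX a.2
    have hbX : b.1 ∈ (X : Set V) := by exact_mod_cast hWX b.2
    obtain ⟨p⟩ := hconn.preconnected ⟨a.1, haX⟩ ⟨b.1, hbX⟩
    exact key _ _ p a b (near_refl 2 _) (near_refl 2 _)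
  obtain ⟨P, hPlen, hPcov⟩ := covering_walk_aux (Fintype.card {x // x ∈ W}) _ SL SLconn
    ⟨v₀, hv₀⟩ rfl
  have expand : ∀ (a b : {x // x ∈ W}) (P : SL.Walk a b), ∃ q : G.Walk a.1 b.1,
      q.length ≤ 6 * P.length ∧ ∀ w : {x // x ∈ W}, w ∈ P.support → w.1 ∈ q.support := by
    intro a b P
    induction P with
    | nil =>
      refine ⟨SimpleGraph.Walk.nil, by simp, ?_⟩
      intro w hw
      simp only [SimpleGraph.Walk.support_nil, List.mem_singleton] at hw ⊢
      rw [hw]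
    | @cons a c b h P ih =>
      obtain ⟨q₁, hq₁len⟩ := h.2
      obtain ⟨q₂, hq₂len, hq₂cov⟩ := ih
      refine ⟨q₁.append q₂, ?_, ?_⟩
      · rw [SimpleGraph.Walk.length_append, SimpleGraph.Walk.length_cons]; omega
      · intro w hw
        rw [SimpleGraph.Walk.support_cons] at hw
        rw [SimpleGraph.Walk.mem_support_append_iff]
        rcases List.mem_cons.1 hw with hw | hw
        · left; rw [hw]; exact q₁.start_mem_support
        · right; exact hq₂cov w hw
  obtain ⟨q, hqlen, hqcov⟩ := expand _ _ P
  refine ⟨v₀, q, hv₀, ?_, ?_⟩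
  · rw [Fintype.card_coe] at hPlen; omega
  · intro w hw
    exact hqcov ⟨w, hw⟩ (hPcov _)
end Abstract

section Torus
variable {m n : ℕ} [NeZero m]

/-- The `i`-th unit vector. -/
def uv (m : ℕ) {n : ℕ} (i : Fin n) : Fin n → ZMod m := fun j => if j = i then 1 else 0

/-- A move: either stand still, or move one step in a coordinate direction. -/
abbrev Move (m n : ℕ) := Option (Fin n × Bool)

def step (v : Fin n → ZMod m) : Move m n → (Fin n → ZMod m)
  | none => v
  | some (i, true) => v + uv m i
  | some (i, false) => v - uv m i

def iter (v : Fin n → ZMod m) (f : ℕ → Move m n) : ℕ → (Fin n → ZMod m)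
  | 0 => v
  | k + 1 => step (iter v f k) (f k)

lemma torus_adj_iff {x y : Fin n → ZMod m} : (torus m n).Adj x y ↔ x ≠ y ∧
    ((∃ i, x i = y i + 1 ∧ ∀ j, j ≠ i → x j = y j) ∨
     (∃ i, y i = x i + 1 ∧ ∀ j, j ≠ i → y j = x j)) := by
  rw [torus, SimpleGraph.fromRel_adj]

lemma adj_step {x y : Fin n → ZMod m} (h : (torus m n).Adj x y) :
    ∃ mv : Move m n, step x mv = y := by
  rw [torus_adj_iff] at h
  obtain ⟨-, ⟨i, h1, h2⟩ | ⟨i, h1, h2⟩⟩ := h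
  · refine ⟨some (i, false), funext fun j => ?_⟩
    show x j - uv m i j = y j
    by_cases hj : j = i
    · subst hj; rw [show uv m j j = 1 by simp [uv], h1]; ring
    · rw [show uv m i j = 0 by simp [uv, hj], h2 j hj]; ring
  · refine ⟨some (i, true), funext fun j => ?_⟩
    show x j + uv m i j = y j
    by_cases hj : j = i
    · subst hj; rw [show uv m j j = 1 by simp [uv], h1]
    · rw [show uv m i j = 0 by simp [uv, hj], h2 j hj]; ring

lemma zmod_one_ne_zero (hm2 : 2 ≤ m) : (1 : ZMod m) ≠ 0 := by
  haveI : Fact (1 < m) := ⟨hm2⟩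
  exact one_ne_zero

lemma adj_of_add_uv (hm2 : 2 ≤ m) (w : Fin n → ZMod m) (i : Fin n) :
    (torus m n).Adj (w + uv m i) w := by
  rw [torus_adj_iff]
  constructor
  · intro h
    have h1 : w i + uv m i i = w i := congrFun h i
    rw [show uv m i i = 1 by simp [uv]] at h1
    exact zmod_one_ne_zero hm2 (by linear_combination h1)
  · left
    exact ⟨i, by simp [uv], fun j hj => by simp [uv, hj]⟩

lemma adj_of_sub_uv (hm2 : 2 ≤ m) (w : Fin n → ZMod m) (i : Fin n) :
    (torus m n).Adj (w - uv m i) w := by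
  rw [torus_adj_iff]
  constructor
  · intro h
    have h1 : w i - uv m i i = w i := congrFun h i
    rw [show uv m i i = 1 by simp [uv]] at h1
    exact zmod_one_ne_zero hm2 (by linear_combination -h1)
  · right
    refine ⟨i, ?_, fun j hj => ?_⟩
    · show w i = w i - uv m i i + 1
      rw [show uv m i i = 1 by simp [uv]]; ring
    · show w j = w j - uv m i j
      rw [show uv m i j = 0 by simp [uv, hj]]; ring

lemma uv_inj (hm2 : 2 ≤ m) {i j : Fin n} (h : uv m i = uv m j) : i = j := by
  by_contra hne
  have h1 : uv m i i = uv m j i := congrFun h i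
  rw [show uv m i i = 1 by simp [uv], show uv m j i = 0 by simp [uv, hne]] at h1
  exact zmod_one_ne_zero hm2 h1

lemma uv_ne_neg (h2 : (2 : ZMod m) ≠ 0) (hm2 : 2 ≤ m) (i j : Fin n) :
    uv m i ≠ -(uv m j) := by
  intro h
  have h1 : uv m i i = -(uv m j i) := congrFun h i
  by_cases hij : i = j
  · subst hij
    rw [show uv m i i = 1 by simp [uv]] at h1
    exact h2 (by linear_combination h1)
  · rw [show uv m i i = 1 by simp [uv], show uv m j i = 0 by simp [uv, hij]] at h1
    exact zmod_one_ne_zero hm2 (by linear_combination h1)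

/-- Every vertex of the torus has at least `degT m n` neighbours. -/
lemma degT_le_card_nbhd (hm2 : 2 ≤ m) (w : Fin n → ZMod m) :
    degT m n ≤ (nbhd (torus m n) {w}).card := by
  classical
  have hmemnbhd : ∀ v, (torus m n).Adj w v → v ∈ nbhd (torus m n) {w} := by
    intro v hv
    simp only [nbhd, Finset.mem_filter, Finset.mem_univ, true_and]
    exact ⟨w, Finset.mem_singleton_self w, hv⟩
  by_cases hm : m = 2
  · have hinj : Function.Injective (fun i : Fin n => w + uv m i) := by
      intro i j hij
      exact uv_inj hm2 (by simpa [add_right_inj] using hij)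
    have hc : (Finset.univ.image (fun i : Fin n => w + uv m i)).card = n := by
      rw [Finset.card_image_of_injective _ hinj, Finset.card_univ, Fintype.card_fin]
    have hsub : (Finset.univ.image (fun i : Fin n => w + uv m i)) ⊆ nbhd (torus m n) {w} := by
      intro v hv
      obtain ⟨i, -, rfl⟩ := Finset.mem_image.1 hv
      exact hmemnbhd _ ((adj_of_add_uv hm2 w i).symm)
    have := Finset.card_le_card hsub
    rw [degT, if_pos hm]
    omega
  · have h2ne : (2 : ZMod m) ≠ 0 := by
      intro h
      have hdvd : (m : ℕ) ∣ 2 := by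
        have := (ZMod.natCast_eq_zero_iff 2 m).1 (by exact_mod_cast h)
        exact this
      have := Nat.le_of_dvd (by norm_num) hdvd
      omega
    set dir : Fin n × Bool → (Fin n → ZMod m) := fun p => match p with
      | (i, true) => uv m i
      | (i, false) => -(uv m i) with hdir
    have hinj : Function.Injective (fun p : Fin n × Bool => w + dir p) := by
      intro ⟨i, a⟩ ⟨j, b⟩ hij
      have hd : dir (i, a) = dir (j, b) := by
        have h' : w + dir (i, a) = w + dir (j, b) := hij
        exact add_left_cancel h'
      cases a <;> cases b
      · have : uv m i = uv m j := by
          have := hd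
          simp only [hdir] at this
          exact neg_inj.1 this
        rw [uv_inj hm2 this]
      · exact absurd (by simpa [hdir] using hd.symm) (uv_ne_neg h2ne hm2 j i)
      · exact absurd (by simpa [hdir] using hd) (uv_ne_neg h2ne hm2 i j)
      · have : uv m i = uv m j := by simpa [hdir] using hd
        rw [uv_inj hm2 this]
    have hc : (Finset.univ.image (fun p : Fin n × Bool => w + dir p)).card = 2 * n := by
      rw [Finset.card_image_of_injective _ hinj, Finset.card_univ]
      simp [mul_comm]
    have hsub : (Finset.univ.image (fun p : Fin n × Bool => w + dir p)) ⊆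
        nbhd (torus m n) {w} := by
      intro v hv
      obtain ⟨⟨i, b⟩, -, rfl⟩ := Finset.mem_image.1 hv
      cases b
      · have : w + dir (i, false) = w - uv m i := by
          simp [hdir, sub_eq_add_neg]
        rw [this]
        exact hmemnbhd _ ((adj_of_sub_uv hm2 w i).symm)
      · exact hmemnbhd _ ((adj_of_add_uv hm2 w i).symm)
    have := Finset.card_le_card hsub
    rw [degT, if_neg hm]
    omega

/-- Encoding a walk by a sequence of moves. -/
lemma encode_walk : ∀ (a b : Fin n → ZMod m) (q : (torus m n).Walk a b),
    ∃ f : ℕ → Move m n, (∀ k, q.length ≤ k → f k = none) ∧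
      (∀ v ∈ q.support, ∃ k, k ≤ q.length ∧ iter a f k = v) := by
  intro a b q
  induction q with
  | nil =>
    exact ⟨fun _ => none, fun k _ => rfl, fun v hv => ⟨0, le_refl _, by
      simp only [SimpleGraph.Walk.support_nil, List.mem_singleton] at hv
      rw [hv]; rfl⟩⟩
  | @cons a c b h q ih =>
    obtain ⟨f', hf'none, hf'cov⟩ := ih
    obtain ⟨mv, hmv⟩ := adj_step h
    refine ⟨fun k => if k = 0 then mv else f' (k - 1), ?_, ?_⟩
    · intro k hk
      rw [SimpleGraph.Walk.length_cons] at hk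
      show (if k = 0 then mv else f' (k - 1)) = none
      rw [if_neg (by omega)]
      exact hf'none _ (by omega)
    · have hshift : ∀ k, iter a (fun k => if k = 0 then mv else f' (k - 1)) (k + 1) =
          iter c f' k := by
        intro k
        induction k with
        | zero =>
          show step (iter a _ 0) (if (0 : ℕ) = 0 then mv else f' (0 - 1)) = c
          rw [if_pos rfl]
          exact hmv
        | succ k ihk =>
          show step (iter a _ (k + 1)) (if k + 1 = 0 then mv else f' (k + 1 - 1)) =
            step (iter c f' k) (f' k)
          rw [ihk, if_neg (Nat.succ_ne_zero k), Nat.add_sub_cancel]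
      intro v hv
      rw [SimpleGraph.Walk.support_cons] at hv
      rcases List.mem_cons.1 hv with hv | hv
      · exact ⟨0, by omega, by rw [hv]; rfl⟩
      · obtain ⟨k, hk, hkv⟩ := hf'cov v hv
        exact ⟨k + 1, by rw [SimpleGraph.Walk.length_cons]; omega, by rw [hshift k]; exact hkv⟩
end Torus

section Main
variable {m n : ℕ} [NeZero m]

set_option maxHeartbeats 1000000 in
/-- Cover-container lemma: there is a small family `𝒱` of sets such that every
`G²`-connected `X` with `|N(X)| = g` is covered by some member of `𝒱`. -/
theorem torus_cover_containers (m : ℕ) [NeZero m] (hm : Even m) (hm2 : 2 ≤ m) :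
    ∃ c : ℝ, 0 < c ∧ ∀ n : ℕ, 1 ≤ n → ∀ g : ℕ,
      ∃ 𝒱 : Finset (Finset (Fin n → ZMod m)),
        (𝒱.card : ℝ) ≤
          (2 : ℝ) ^ (c * ((g : ℝ) * Real.logb 2 (degT m n) / (degT m n : ℝ) +
            (degT m n : ℝ))) ∧
        ∀ X : Finset (Fin n → ZMod m), GsqConnected (torus m n) X →
          (nbhd (torus m n) X).card = g →
          ∃ Y ∈ 𝒱, Covers (torus m n) Y X := by
  classical
  refine ⟨(m : ℝ) + 109, by positivity, ?_⟩
  intro n hn g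
  -- every vertex has a neighbour
  have exists_nbr : ∀ x : Fin n → ZMod m, ∃ y, (torus m n).Adj x y := by
    intro x
    have hd1 : 1 ≤ degT m n := by
      rw [degT]; split <;> omega
    have := degT_le_card_nbhd (n := n) hm2 x
    have hne : (nbhd (torus m n) {x}).Nonempty := Finset.card_pos.1 (by omega)
    obtain ⟨y, hy⟩ := hne
    simp only [nbhd, Finset.mem_filter, Finset.mem_univ, true_and] at hy
    obtain ⟨x', hx', hadj⟩ := hy
    rw [Finset.mem_singleton] at hx'
    subst hx'
    exact ⟨y, hadj⟩
  by_cases hd2 : degT m n < 2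
  · -- degenerate case : m = 2, n = 1
    have hmn : m = 2 ∧ n = 1 := by
      rw [degT] at hd2
      by_cases hm' : m = 2
      · rw [if_pos hm'] at hd2; exact ⟨hm', by omega⟩
      · rw [if_neg hm'] at hd2; omega
    obtain ⟨rfl, rfl⟩ := hmn
    refine ⟨Finset.univ, ?_, ?_⟩
    · have hc : Fintype.card (Finset (Fin 1 → ZMod 2)) = 4 := by
        rw [Fintype.card_finset]
        norm_num [Fintype.card_fun, ZMod.card]
      rw [Finset.card_univ, hc]
      have hdeg : degT 2 1 = 1 := by rw [degT]; norm_num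
      rw [hdeg]
      push_cast
      rw [Real.logb_one]
      have h4 : (4 : ℝ) = (2 : ℝ) ^ (2 : ℝ) := by
        rw [show (2:ℝ) = ((2:ℕ):ℝ) by norm_num, Real.rpow_natCast]; norm_num
      rw [h4]
      apply Real.rpow_le_rpow_of_exponent_le (by norm_num)
      norm_num
    · intro X hX hg
      refine ⟨nbhd (torus 2 1) X, Finset.mem_univ _, ?_, ?_⟩
      · intro x hx
        obtain ⟨y, hy⟩ := exists_nbr x
        refine ⟨y, ?_, hy⟩
        simp only [nbhd, Finset.mem_filter, Finset.mem_univ, true_and]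
        exact ⟨x, hx, hy⟩
      · intro y hy
        simp only [nbhd, Finset.mem_filter, Finset.mem_univ, true_and] at hy
        obtain ⟨x, hx, hadj⟩ := hy
        exact ⟨x, hx, hadj.symm⟩
  · -- main case : d ≥ 2
    push_neg at hd2
    set d := degT m n with hdd
    set t := g / d with ht
    set L := 12 * t + 12 with hL
    set dec : (Fin n → ZMod m) × (Fin L → Move m n) × (Fin (L+1) → Bool) × (Fin (L+1) → Bool)
        → Finset (Fin n → ZMod m) := fun dat =>
      nbhd (torus m n) (((Finset.univ : Finset (Fin (L+1))).filter
          fun k => dat.2.2.1 k = true).image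
          fun k => iter dat.1 (fun j => if h : j < L then dat.2.1 ⟨j, h⟩ else none) k.1)
        ∪ ((Finset.univ.filter fun k => dat.2.2.2 k = true).image
          fun k => iter dat.1 (fun j => if h : j < L then dat.2.1 ⟨j, h⟩ else none) k.1)
      with hdec
    refine ⟨Finset.image dec Finset.univ, ?_, ?_⟩
    · -- cardinality bound
      have hnd : n ≤ d := by
        rw [hdd, degT]; split <;> omega
      have hcard1 : (Finset.image dec Finset.univ).card ≤
          Fintype.card ((Fin n → ZMod m) × (Fin L → Move m n) ×
            (Fin (L+1) → Bool) × (Fin (L+1) → Bool)) := by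
        refine le_trans Finset.card_image_le ?_
        rw [Finset.card_univ]
      have hcardE : Fintype.card ((Fin n → ZMod m) × (Fin L → Move m n) ×
          (Fin (L+1) → Bool) × (Fin (L+1) → Bool)) =
          m ^ n * (2 * n + 1) ^ L * 2 ^ (L+1) * 2 ^ (L+1) := by
        rw [Fintype.card_prod, Fintype.card_prod, Fintype.card_prod]
        rw [Fintype.card_fun, Fintype.card_fun, Fintype.card_fun]
        simp [ZMod.card, Fintype.card_option, Fintype.card_prod, Fintype.card_bool,
          Fintype.card_fin]
        ring
      have hnat : m ^ n * (2 * n + 1) ^ L * 2 ^ (L+1) * 2 ^ (L+1) ≤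
          2 ^ (m * n + 2 * L + 2) * d ^ (3 * L) := by
        have h1 : m ^ n ≤ 2 ^ (m * n) := by
          calc m ^ n ≤ (2 ^ m) ^ n := Nat.pow_le_pow_left (Nat.le_of_lt (Nat.lt_two_pow_self (n := m))) n
          _ = 2 ^ (m * n) := by rw [← pow_mul]
        have h2 : (2 * n + 1) ^ L ≤ (d ^ 3) ^ L := by
          apply Nat.pow_le_pow_left
          have h4 : 4 ≤ d * d := by nlinarith
          have : 4 * d ≤ d ^ 3 := by
            calc 4 * d ≤ (d * d) * d := Nat.mul_le_mul_right d h4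
            _ = d ^ 3 := by ring
          omega
        calc m ^ n * (2 * n + 1) ^ L * 2 ^ (L+1) * 2 ^ (L+1)
            ≤ 2 ^ (m * n) * (d ^ 3) ^ L * 2 ^ (L+1) * 2 ^ (L+1) := by
              apply Nat.mul_le_mul (Nat.mul_le_mul (Nat.mul_le_mul h1 h2) (le_refl _)) (le_refl _)
          _ = 2 ^ (m * n + 2 * L + 2) * d ^ (3 * L) := by
              rw [← pow_mul]
              ring
      -- now real arithmetic
      have hd0 : (0:ℝ) < (d:ℝ) := by
        have h' : (0:ℕ) < d := by omega
        exact_mod_cast h'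
      have hdR2 : (2:ℝ) ≤ (d:ℝ) := by exact_mod_cast hd2
      set lg := Real.logb 2 (d:ℝ) with hlg
      have hlg1 : 1 ≤ lg := by
        rw [hlg, Real.le_logb_iff_rpow_le (by norm_num) hd0, Real.rpow_one]
        exact hdR2
      have hlgd : lg ≤ (d:ℝ) := by
        rw [hlg, Real.logb_le_iff_le_rpow (by norm_num) hd0]
        calc (d:ℝ) ≤ ((2 ^ d : ℕ) : ℝ) := by exact_mod_cast (Nat.lt_two_pow_self (n := d)).le
          _ = (2:ℝ) ^ ((d:ℕ):ℝ) := by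
              push_cast
              rw [Real.rpow_natCast]
      have hT : (t:ℝ) ≤ (g:ℝ) / (d:ℝ) := by rw [ht]; exact_mod_cast Nat.cast_div_le
      have hstep1 : ((Finset.image dec Finset.univ).card : ℝ) ≤
          ((2 ^ (m * n + 2 * L + 2) * d ^ (3 * L) : ℕ) : ℝ) :=
        Nat.cast_le.2 (le_trans hcard1 (le_trans (le_of_eq hcardE) hnat))
      have hsplit : ((2 ^ (m * n + 2 * L + 2) * d ^ (3 * L) : ℕ) : ℝ) =
          (2:ℝ) ^ ((m * n + 2 * L + 2 : ℕ) : ℝ) * (d:ℝ) ^ ((3 * L : ℕ) : ℝ) := by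
        rw [Real.rpow_natCast, Real.rpow_natCast]
        push_cast
        ring
      have hdpow : (d:ℝ) ^ ((3 * L : ℕ) : ℝ) = (2:ℝ) ^ (lg * ((3 * L : ℕ) : ℝ)) := by
        conv_lhs => rw [← Real.rpow_logb (by norm_num : (0:ℝ) < 2) (by norm_num) hd0]
        rw [← Real.rpow_mul (by norm_num : (0:ℝ) ≤ 2)]
      have hcomb : (2:ℝ) ^ ((m * n + 2 * L + 2 : ℕ) : ℝ) * (2:ℝ) ^ (lg * ((3 * L : ℕ) : ℝ)) =
          (2:ℝ) ^ (((m * n + 2 * L + 2 : ℕ) : ℝ) + lg * ((3 * L : ℕ) : ℝ)) :=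
        (Real.rpow_add (by norm_num) _ _).symm
      have hexp : ((m * n + 2 * L + 2 : ℕ) : ℝ) + lg * ((3 * L : ℕ) : ℝ) ≤
          ((m:ℝ) + 109) * ((g:ℝ) * lg / (d:ℝ) + (d:ℝ)) := by
        have hLR : ((L : ℕ) : ℝ) = 12 * (t:ℝ) + 12 := by rw [hL]; push_cast; ring
        have f1 : (m:ℝ) * (n:ℝ) ≤ (m:ℝ) * (d:ℝ) :=
          mul_le_mul_of_nonneg_left (by exact_mod_cast hnd) (by positivity)
        have ht0 : (0:ℝ) ≤ (t:ℝ) := Nat.cast_nonneg t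
        have f2 : (t:ℝ) ≤ (t:ℝ) * lg := by nlinarith
        have hlg0 : (0:ℝ) ≤ lg := by linarith
        have f3 : (t:ℝ) * lg ≤ (g:ℝ) * lg / (d:ℝ) := by
          have h' := mul_le_mul_of_nonneg_right hT hlg0
          calc (t:ℝ) * lg ≤ (g:ℝ) / (d:ℝ) * lg := h'
            _ = (g:ℝ) * lg / (d:ℝ) := by ring
        have f6 : (0:ℝ) ≤ (g:ℝ) * lg / (d:ℝ) := by positivity
        have f8 : (0:ℝ) ≤ (m:ℝ) * ((g:ℝ) * lg / (d:ℝ)) :=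
          mul_nonneg (Nat.cast_nonneg m) f6
        push_cast
        rw [hLR]
        linarith [f1, f2, f3, f6, f8, hlgd, hdR2, ht0]
      calc ((Finset.image dec Finset.univ).card : ℝ)
          ≤ ((2 ^ (m * n + 2 * L + 2) * d ^ (3 * L) : ℕ) : ℝ) := hstep1
        _ = (2:ℝ) ^ ((m * n + 2 * L + 2 : ℕ) : ℝ) * (d:ℝ) ^ ((3 * L : ℕ) : ℝ) := hsplit
        _ = (2:ℝ) ^ ((m * n + 2 * L + 2 : ℕ) : ℝ) * (2:ℝ) ^ (lg * ((3 * L : ℕ) : ℝ)) := by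
            rw [hdpow]
        _ = (2:ℝ) ^ (((m * n + 2 * L + 2 : ℕ) : ℝ) + lg * ((3 * L : ℕ) : ℝ)) := hcomb
        _ ≤ (2:ℝ) ^ (((m:ℝ) + 109) * ((g:ℝ) * lg / (d:ℝ) + (d:ℝ))) :=
            Real.rpow_le_rpow_of_exponent_le (by norm_num) hexp
    · -- covering property
      intro X hX hg
      obtain ⟨x₀S⟩ := hX.nonempty
      have hx₀X : (x₀S.1 : Fin n → ZMod m) ∈ X := by exact_mod_cast x₀S.2
      obtain ⟨W, hWX, hWsep, hWnear⟩ := exists_code (torus m n) X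
      obtain ⟨w₀, hw₀W, -⟩ := hWnear _ hx₀X
      -- degree/packing bound
      have hcardW : W.card * d ≤ g := by
        have hdisj : ∀ w₁ ∈ W, ∀ w₂ ∈ W, w₁ ≠ w₂ →
            Disjoint (nbhd (torus m n) {w₁}) (nbhd (torus m n) {w₂}) := by
          intro w₁ h₁ w₂ h₂ hne
          rw [Finset.disjoint_left]
          intro z hz₁ hz₂
          simp only [nbhd, Finset.mem_filter, Finset.mem_univ, true_and,
            Finset.mem_singleton, exists_eq_left] at hz₁ hz₂
          exact hWsep w₁ h₁ w₂ h₂ hne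
            ⟨SimpleGraph.Walk.cons hz₁ (SimpleGraph.Walk.cons hz₂.symm SimpleGraph.Walk.nil),
              by simp⟩
        calc W.card * d = ∑ _w ∈ W, d := by rw [Finset.sum_const, smul_eq_mul]
          _ ≤ ∑ w ∈ W, (nbhd (torus m n) {w}).card :=
              Finset.sum_le_sum (fun w _ => degT_le_card_nbhd hm2 w)
          _ = (W.biUnion fun w => nbhd (torus m n) {w}).card :=
              (Finset.card_biUnion hdisj).symm
          _ ≤ (nbhd (torus m n) X).card := by
              apply Finset.card_le_card
              intro z hz
              obtain ⟨w, hwW, hzw⟩ := Finset.mem_biUnion.1 hz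
              simp only [nbhd, Finset.mem_filter, Finset.mem_univ, true_and,
                Finset.mem_singleton, exists_eq_left] at hzw ⊢
              exact ⟨w, hWX hwW, hzw⟩
          _ = g := hg
      have hWt : W.card ≤ t := by
        rw [ht]
        exact (Nat.le_div_iff_mul_le (by omega)).2 hcardW
      obtain ⟨v₀, q, hv₀W, hqlen, hqcov⟩ :=
        code_walk (torus m n) X W hX hWX hWnear ⟨w₀, hw₀W⟩
      have hqL : q.length ≤ L := by
        have : 12 * (W.card - 1) ≤ 12 * t := by omega
        omega
      obtain ⟨f, hfnone, hfcov⟩ := encode_walk v₀ v₀ q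
      set fL : Fin L → Move m n := fun k => f k.1 with hfL
      have hfeq : (fun j => if h : j < L then fL ⟨j, h⟩ else none) = f := by
        funext j
        by_cases hj : j < L
        · simp [hj, hfL]
        · rw [dif_neg hj]
          exact (hfnone j (by omega)).symm
      set pos : Fin (L+1) → (Fin n → ZMod m) := fun k => iter v₀ f k.1 with hpos
      set W₁ := W.filter (fun w => ∃ x ∈ X, (torus m n).Adj w x) with hW₁
      have key1 : ∀ S : Finset (Fin n → ZMod m), (∀ w ∈ S, w ∈ q.support) →
          ((Finset.univ.filter fun k => decide (pos k ∈ S) = true).image pos) = S := by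
        intro S hS
        apply Finset.Subset.antisymm
        · intro y hy
          obtain ⟨k, hk, rfl⟩ := Finset.mem_image.1 hy
          have := (Finset.mem_filter.1 hk).2
          simpa using this
        · intro w hw
          obtain ⟨k, hk, hiter⟩ := hfcov w (hS w hw)
          refine Finset.mem_image.2 ⟨⟨k, by omega⟩, Finset.mem_filter.2
            ⟨Finset.mem_univ _, ?_⟩, hiter⟩
          simp only [hpos, decide_eq_true_eq]
          rw [hiter]
          exact hw
      set dat : (Fin n → ZMod m) × (Fin L → Move m n) × (Fin (L+1) → Bool) ×
          (Fin (L+1) → Bool) :=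
        (v₀, fL, (fun k => decide (pos k ∈ W)), (fun k => decide (pos k ∈ W₁))) with hdat
      have hW₁sub : ∀ w ∈ W₁, w ∈ q.support := by
        intro w hw
        exact hqcov w (Finset.mem_of_mem_filter _ hw)
      have hdecdat : dec dat = nbhd (torus m n) W ∪ W₁ := by
        rw [hdec]
        simp only [hdat]
        rw [hfeq]
        rw [key1 W hqcov, key1 W₁ hW₁sub]
      refine ⟨dec dat, Finset.mem_image_of_mem dec (Finset.mem_univ dat), ?_, ?_⟩
      · -- every x in X has a neighbour in Y
        intro x hx
        rw [hdecdat]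
        obtain ⟨w, hwW, hnear⟩ := hWnear x hx
        rcases near2_cases hnear with rfl | hadj | ⟨z, h1, h2⟩
        · obtain ⟨y, hy⟩ := exists_nbr x
          refine ⟨y, Finset.mem_union_left _ ?_, hy⟩
          simp only [nbhd, Finset.mem_filter, Finset.mem_univ, true_and]
          exact ⟨x, hwW, hy⟩
        · refine ⟨w, Finset.mem_union_right _ ?_, hadj⟩
          rw [hW₁, Finset.mem_filter]
          exact ⟨hwW, x, hx, hadj.symm⟩
        · refine ⟨z, Finset.mem_union_left _ ?_, h1⟩
          simp only [nbhd, Finset.mem_filter, Finset.mem_univ, true_and]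
          exact ⟨w, hwW, h2.symm⟩
      · -- every y in Y has a neighbour in X
        intro y hy
        rw [hdecdat] at hy
        rcases Finset.mem_union.1 hy with hy | hy
        · simp only [nbhd, Finset.mem_filter, Finset.mem_univ, true_and] at hy
          obtain ⟨w, hwW, hadj⟩ := hy
          exact ⟨w, hWX hwW, hadj.symm⟩
        · rw [hW₁, Finset.mem_filter] at hy
          obtain ⟨-, x, hxX, hadj⟩ := hy
          exact ⟨x, hxX, hadj⟩
end Main

end
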